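/- The kernel relation of a branching bisimulation function is a branching bisimulation relation containing the given pair: if f : X → Y is a branching bisimulation function between transition systems with silent moves, then the relation R = {(x, x') : f(x) = f(x')} is a branching bisimulation relation on X. -/
import Mathlib

variable {X Y A : Type}

/-- Zero or more silent (`τ = none`) steps. -/
def Silent {X A : Type} (tr : X → Option A → X → Prop) : X → X → Prop :=
  Relation.ReflTransGen (fun x x' => tr x none x')

/-- A branching bisimulation function `f : X → Y`. -/
def BranchingBisimFun (trX : X → Option A → X → Prop) (trY : Y → Option A → Y → Prop)
    (f : X → Y) : Prop :=
  Function.Surjective f ∧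
  -- (1) simulation of observable transitions
  (∀ x x' (a : A), trX x (some a) x' → trY (f x) (some a) (f x')) ∧
  -- (2) (possible) simulation of silent transitions
  (∀ x x', trX x none x' → f x = f x' ∨ trY (f x) none (f x')) ∧
  -- (3) stuttering of silent transitions
  (∀ x₁ x₂ x₃, Silent trX x₁ x₂ → Silent trX x₂ x₃ → f x₁ = f x₃ → f x₁ = f x₂) ∧
  -- (4) weak reflection of transitions
  (∀ x y (a : Option A), trY (f x) a y →
    ∃ x' x'', Silent trX x x' ∧ trX x' a x'' ∧ f x' = f x ∧ f x'' = y)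

/-- A branching bisimulation relation. -/
def BranchingBisimRel (tr : X → Option A → X → Prop) (R : X → X → Prop) : Prop :=
  Symmetric R ∧
  ∀ x₁ x₂ y₁ (a : Option A), tr x₁ a x₂ → R x₁ y₁ →
    (a = none ∧ R x₂ y₁) ∨
    ∃ y y₂, Silent tr y₁ y ∧ tr y a y₂ ∧ R x₁ y ∧ R x₂ y₂

/-- the kernel relation of a branching bisimulation function is a
branching bisimulation relation. -/
theorem kernel_of_branching_bisim_function_is_branching_bisim
    (trX : X → Option A → X → Prop) (trY : Y → Option A → Y → Prop)
    (f : X → Y) (hf : BranchingBisimFun trX trY f) :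
    BranchingBisimRel trX (fun x x' => f x = f x') := by
  obtain ⟨-, h1, h2, -, h4⟩ := hf
  refine ⟨fun x x' h => h.symm, ?_⟩
  intro x₁ x₂ y₁ a htr hR
  cases a with
  | none =>
    rcases h2 x₁ x₂ htr with h | h
    · exact Or.inl ⟨rfl, h.symm.trans hR⟩
    · rw [hR] at h
      obtain ⟨y, y₂, hs, ht, he1, he2⟩ := h4 y₁ (f x₂) none h
      exact Or.inr ⟨y, y₂, hs, ht, hR.trans he1.symm, he2.symm⟩
  | some a =>
    have h := h1 x₁ x₂ a htr
    rw [hR] at h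
    obtain ⟨y, y₂, hs, ht, he1, he2⟩ := h4 y₁ (f x₂) (some a) h
    exact Or.inr ⟨y, y₂, hs, ht, hR.trans he1.symm, he2.symm⟩
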